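/- Let k^× act on V = k^n (n ≥ 2, char k ≠ 2) via the torus T = (k^×)^{n-1} acting by (α₁,…,α_{n−1})·(x₁,…,x_n) = ((α₁⋯α_{n−1})x₁, α₁^{−2}x₂, α₂^{−2}x₃, …, α_{n−1}^{−2}x_n). Then a monomial in the coordinate functions on V^{n+1} is T-invariant if and only if its multidegree (total degree in the coordinates of each of the n coordinate-index classes) has the form (2d, d, d, …, d). Consequently, the points v = (−e₁, e₁, e₂, …, e_n) and v' = (e₁, e₁, e₂, …, e_n) in V^{n+1} are separated by the invariant x(1)₁x(2)₁x(3)₂⋯x(n+1)_n, but cannot be separated by any invariant polynomial depending on at most n of the n+1 vector variables. -/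
import Mathlib


open MvPolynomial

/-- The action of the torus `T = (kˣ)^{n-1}` on points of `V^{n+1}` (with `V = kⁿ`):
`(α₁,…,α_{n−1})` scales the `0`-th coordinate of each vector by `α₁⋯α_{n−1}` and the
`j`-th coordinate (`j ≥ 1`) by `α_j⁻²`. A point of `V^{n+1}` is a function
`Fin (n+1) × Fin n → k`. -/
def torusAct {k : Type} [Field k] (n : ℕ) (α : Fin (n - 1) → kˣ)
    (p : Fin (n + 1) × Fin n → k) : Fin (n + 1) × Fin n → k :=
  fun q =>
    (if h : (q.2 : ℕ) = 0 then ∏ t, ((α t : kˣ) : k)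
      else (((α ⟨(q.2 : ℕ) - 1, by have := q.2.isLt; omega⟩ : kˣ) : k))⁻¹ ^ 2) * p q

/-- A polynomial on `V^{n+1}` is a torus invariant. -/
def TorusInvariant {k : Type} [Field k] (n : ℕ)
    (f : MvPolynomial (Fin (n + 1) × Fin n) k) : Prop :=
  ∀ (α : Fin (n - 1) → kˣ) (p : Fin (n + 1) × Fin n → k),
    MvPolynomial.eval (torusAct n α p) f = MvPolynomial.eval p f

/-- The point `v = (−e₁, e₁, e₂, …, e_n)` of `V^{n+1}`. -/
def ptV {k : Type} [Field k] (n : ℕ) : Fin (n + 1) × Fin n → k :=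
  fun q => if (q.1 : ℕ) = 0 then (if (q.2 : ℕ) = 0 then -1 else 0)
    else (if (q.2 : ℕ) + 1 = (q.1 : ℕ) then 1 else 0)

/-- The point `v' = (e₁, e₁, e₂, …, e_n)` of `V^{n+1}`. -/
def ptV' {k : Type} [Field k] (n : ℕ) : Fin (n + 1) × Fin n → k :=
  fun q => if (q.1 : ℕ) = 0 then (if (q.2 : ℕ) = 0 then 1 else 0)
    else (if (q.2 : ℕ) + 1 = (q.1 : ℕ) then 1 else 0)

/-- The invariant monomial `x(1)₁ x(2)₁ x(3)₂ ⋯ x(n+1)_n`. -/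
noncomputable def sepMonomial (k : Type) [Field k] (n : ℕ) (hn : 2 ≤ n) :
    MvPolynomial (Fin (n + 1) × Fin n) k :=
  ∏ i : Fin (n + 1),
    X (i, if _ : (i : ℕ) ≤ 1 then ⟨0, by omega⟩
          else ⟨(i : ℕ) - 1, by have := i.isLt; omega⟩)

section Aux

variable {k : Type} [Field k] {m : ℕ}


variable {k : Type} [Field k] {m : ℕ}

/-- unit scaling factor on coordinate class `j` -/
def uFac (α : Fin (m + 1) → kˣ) (j : Fin (m + 2)) : kˣ :=
  if (j : ℕ) = 0 then ∏ t, α t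
  else ((α ⟨(j : ℕ) - 1, by have := j.isLt; omega⟩)⁻¹) ^ 2

lemma torusAct_eq (α : Fin (m + 1) → kˣ) (p : Fin (m + 3) × Fin (m + 2) → k)
    (q : Fin (m + 3) × Fin (m + 2)) :
    torusAct (m + 2) α p q = (uFac α q.2 : k) * p q := by
  show (if h : (q.2 : ℕ) = 0 then _ else _) * p q = _
  unfold uFac
  split_ifs with h
  · norm_cast
  · push_cast
    ring

lemma uFac_zero (α : Fin (m + 1) → kˣ) : uFac α (0 : Fin (m + 2)) = ∏ t, α t := by
  simp [uFac]

lemma uFac_succ (α : Fin (m + 1) → kˣ) (t : Fin (m + 1)) :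
    uFac α t.succ = ((α t)⁻¹) ^ 2 := by
  unfold uFac
  rw [if_neg (by simp [Fin.val_succ])]
  congr 2


/-- multidegree in class `j` -/
def Dg (e : Fin (m + 3) × Fin (m + 2) →₀ ℕ) (j : Fin (m + 2)) : ℕ := ∑ i, e (i, j)

lemma chi_eval (α : Fin (m + 1) → kˣ) (p : Fin (m + 3) × Fin (m + 2) → k)
    (e : Fin (m + 3) × Fin (m + 2) →₀ ℕ) (c : k) :
    eval (torusAct (m + 2) α p) (monomial e c)
      = ((∏ j, uFac α j ^ Dg e j : kˣ) : k) * eval p (monomial e c) := by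
  rw [eval_monomial, eval_monomial, Finsupp.prod_pow, Finsupp.prod_pow]
  simp_rw [torusAct_eq α p, mul_pow, Finset.prod_mul_distrib]
  have key : (∏ q : Fin (m + 3) × Fin (m + 2), ((uFac α q.2 : k)) ^ e q)
      = ((∏ j, uFac α j ^ Dg e j : kˣ) : k) := by
    have : ((∏ j, uFac α j ^ Dg e j : kˣ) : k) = ∏ j, ((uFac α j : k)) ^ Dg e j := by
      norm_cast
    rw [this, ← Finset.univ_product_univ, Finset.prod_product_right]
    refine Finset.prod_congr rfl fun j _ => ?_
    show (∏ x : Fin (m + 3), ((uFac α j : k)) ^ e (x, j)) = _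
    rw [Finset.prod_pow_eq_pow_sum]
    rfl
  rw [key]
  ring

lemma pow_exp_eq {mm ll : ℕ} [Infinite k] (h : ∀ a : kˣ, (a : k) ^ mm = (a : k) ^ ll) :
    mm = ll := by
  by_contra hne
  have hp : (Polynomial.X ^ mm - Polynomial.X ^ ll : Polynomial k) = 0 := by
    apply Polynomial.eq_zero_of_infinite_isRoot
    apply Set.Infinite.mono (s := ({0} : Set k)ᶜ)
    · intro x hx
      rw [Set.mem_compl_singleton_iff] at hx
      have := h (Units.mk0 x hx)
      simp only [Units.val_mk0] at this
      simp [Polynomial.IsRoot, this]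
    · exact Set.Finite.infinite_compl (Set.finite_singleton 0)
  have h2 := congrArg (fun q => Polynomial.coeff q mm) hp
  simp [Polynomial.coeff_X_pow, hne, Ne.symm hne] at h2

lemma chi_one_iff [Infinite k] (D : Fin (m + 2) → ℕ) :
    (∀ α : Fin (m + 1) → kˣ, ∏ j, uFac (k := k) α j ^ D j = 1) ↔
      ∃ d, D 0 = 2 * d ∧ ∀ j : Fin (m + 2), (j : ℕ) ≠ 0 → D j = d := by
  constructor
  · intro h
    have key : ∀ t : Fin (m + 1), D 0 = 2 * D t.succ := by
      intro t
      apply pow_exp_eq (k := k)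
      intro a
      have h1 := h (fun s => if s = t then a else 1)
      rw [Fin.prod_univ_succ] at h1
      have e0 : uFac (fun s => if s = t then a else 1) (0 : Fin (m + 2)) = a := by
        rw [uFac_zero, Finset.prod_ite_eq']
        simp
      have e1 : (∏ t' : Fin (m + 1),
          uFac (fun s => if s = t then a else 1) t'.succ ^ D t'.succ)
          = (a ^ (2 * D t.succ))⁻¹ := by
        rw [Finset.prod_eq_single t]
        · rw [uFac_succ]
          rw [← pow_mul, inv_pow]
          simp
        · intro b _ hb
          rw [uFac_succ, if_neg hb]
          simp
        · simp
      rw [e0, e1, mul_inv_eq_one] at h1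
      have := congrArg (Units.val) h1
      push_cast at this
      exact this
    refine ⟨D (Fin.succ 0), key 0, fun j hj => ?_⟩
    have hlt : (j : ℕ) - 1 < m + 1 := by have := j.isLt; omega
    have hjt : (⟨(j : ℕ) - 1, hlt⟩ : Fin (m + 1)).succ = j := by
      ext; simp [Fin.val_succ]; omega
    have := key ⟨(j : ℕ) - 1, hlt⟩
    rw [hjt] at this
    have h0 := key 0
    omega
  · rintro ⟨d, hd0, hdj⟩ α
    rw [Fin.prod_univ_succ, uFac_zero, hd0]
    have : ∀ t : Fin (m + 1), uFac α t.succ ^ D t.succ = (α t ^ (2 * d))⁻¹ := by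
      intro t
      rw [uFac_succ, hdj t.succ (by simp [Fin.val_succ]), ← pow_mul, inv_pow]
    simp_rw [this]
    rw [← Finset.prod_pow, ← Finset.prod_mul_distrib]
    simp


lemma inv_monomial_iff_chi (e : Fin (m + 3) × Fin (m + 2) →₀ ℕ) (c : k) (hc : c ≠ 0) :
    TorusInvariant (m + 2) (monomial e c) ↔
      ∀ α : Fin (m + 1) → kˣ, ∏ j, uFac (k := k) α j ^ Dg e j = 1 := by
  constructor
  · intro h α
    have h1 := h α (fun _ => 1)
    rw [chi_eval] at h1
    have h2 : eval (fun _ => (1 : k)) (monomial e c) = c := by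
      simp [eval_monomial, Finsupp.prod]
    rw [h2] at h1
    have h3 : ((∏ j, uFac (k := k) α j ^ Dg e j : kˣ) : k) = 1 :=
      mul_right_cancel₀ hc (by rw [h1, one_mul])
    exact Units.ext (by simpa using h3)
  · intro h α p
    rw [chi_eval, h α]
    simp

lemma chi_of_invariant [Infinite k] (f : MvPolynomial (Fin (m + 3) × Fin (m + 2)) k)
    (hf : TorusInvariant (m + 2) f) (e : Fin (m + 3) × Fin (m + 2) →₀ ℕ)
    (he : e ∈ f.support) (α : Fin (m + 1) → kˣ) :
    ∏ j, uFac (k := k) α j ^ Dg e j = 1 := by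
  set g : MvPolynomial (Fin (m + 3) × Fin (m + 2)) k :=
    ∑ e' ∈ f.support,
      monomial e' (((∏ j, uFac α j ^ Dg e' j : kˣ) : k) * coeff e' f) with hgdef
  have hg : ∀ p, eval p g = eval p f := by
    intro p
    rw [← hf α p]
    conv_rhs => rw [← support_sum_monomial_coeff f]
    rw [hgdef, map_sum, map_sum]
    refine Finset.sum_congr rfl fun e' _ => ?_
    rw [chi_eval, eval_monomial, eval_monomial]
    ring
  have hgf : g = f := MvPolynomial.funext hg
  have hc := congrArg (coeff e) hgf
  rw [hgdef, coeff_sum] at hc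
  simp only [coeff_monomial] at hc
  rw [Finset.sum_ite_eq' f.support e, if_pos he] at hc
  have hce : coeff e f ≠ 0 := mem_support_iff.mp he
  have : ((∏ j, uFac (k := k) α j ^ Dg e j : kˣ) : k) = 1 :=
    mul_right_cancel₀ hce (by rw [hc, one_mul])
  exact Units.ext (by simpa using this)


lemma eval_mon_eq (e : Fin (m + 3) × Fin (m + 2) →₀ ℕ) (c : k)
    (hshape : ∃ d, Dg e 0 = 2 * d ∧ ∀ j : Fin (m + 2), (j : ℕ) ≠ 0 → Dg e j = d)
    (S : Finset (Fin (m + 3))) (hS : S.card ≤ m + 2)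
    (hsupp : ∀ q ∈ e.support, q.1 ∈ S) :
    eval (ptV (m + 2)) (monomial e c) = eval (ptV' (m + 2)) (monomial e c) := by
  obtain ⟨d, hd0, hdj⟩ := hshape
  obtain ⟨i₀, hi₀⟩ : ∃ i : Fin (m + 3), i ∉ S := by
    by_contra hcon
    push_neg at hcon
    have h1 : (Finset.univ : Finset (Fin (m + 3))).card ≤ S.card :=
      Finset.card_le_card fun i _ => hcon i
    rw [Finset.card_univ, Fintype.card_fin] at h1
    omega
  rw [eval_monomial, eval_monomial]
  congr 1
  rw [Finsupp.prod, Finsupp.prod]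
  by_cases hgood : ∀ q ∈ e.support, ((q.1 : ℕ) = 0 ∧ (q.2 : ℕ) = 0) ∨ (q.2 : ℕ) + 1 = (q.1 : ℕ)
  · -- all support variables are nonzero coordinates of v, v'
    have heven : Even (e ((0 : Fin (m + 3)), (0 : Fin (m + 2)))) := by
      rcases Nat.lt_or_ge (i₀ : ℕ) 1 with h0 | h1
      · -- i₀ = 0 : the variable (0,0) does not occur
        have : ((0 : Fin (m + 3)), (0 : Fin (m + 2))) ∉ e.support := by
          intro hq
          have := hsupp _ hq
          have hi : i₀ = (0 : Fin (m + 3)) := by ext; simp only [Fin.val_zero]; omega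
          rw [hi] at hi₀
          exact hi₀ this
        rw [Finsupp.notMem_support_iff.mp this]
        exact Even.zero
      rcases Nat.lt_or_ge (i₀ : ℕ) 2 with h2 | h2
      · -- i₀ = 1 : Dg e 0 = e (0,0)
        have hsum : Dg e 0 = e ((0 : Fin (m + 3)), (0 : Fin (m + 2))) := by
          unfold Dg
          rw [Finset.sum_eq_single (0 : Fin (m + 3))]
          · intro i _ hi
            by_contra hne
            have hq : (i, (0 : Fin (m + 2))) ∈ e.support := Finsupp.mem_support_iff.mpr hne
            rcases hgood _ hq with ⟨ha, _⟩ | hb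
            · exact hi (by ext; exact ha)
            · have : (i : ℕ) = 1 := by simpa using hb.symm
              have : i = i₀ := by ext; omega
              exact hi₀ (this ▸ hsupp _ hq)
          · simp
        exact ⟨d, by omega⟩
      · -- i₀ ≥ 2 : d = 0 and e (0,0) = 0
        have hlt : (i₀ : ℕ) - 1 < m + 2 := by have := i₀.isLt; omega
        have hdz : Dg e ⟨(i₀ : ℕ) - 1, hlt⟩ = 0 := by
          unfold Dg
          apply Finset.sum_eq_zero
          intro i _
          by_contra hne
          have hq : (i, (⟨(i₀ : ℕ) - 1, hlt⟩ : Fin (m + 2))) ∈ e.support :=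
            Finsupp.mem_support_iff.mpr hne
          rcases hgood _ hq with ⟨_, hb⟩ | hb
          · simp at hb; omega
          · have hval : (i₀ : ℕ) - 1 + 1 = (i : ℕ) := by simpa using hb
            have : i = i₀ := by ext; omega
            exact hi₀ (this ▸ hsupp _ hq)
        have hd : d = 0 := by
          rw [← hdj ⟨(i₀ : ℕ) - 1, hlt⟩ (by simp; omega)]
          exact hdz
        have hz : e ((0 : Fin (m + 3)), (0 : Fin (m + 2))) = 0 := by
          have hle : e ((0 : Fin (m + 3)), (0 : Fin (m + 2))) ≤ Dg e 0 :=
            Finset.single_le_sum (f := fun i => e (i, (0 : Fin (m + 2))))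
              (fun _ _ => Nat.zero_le _) (Finset.mem_univ _)
          omega
        rw [hz]
        exact Even.zero
    refine Finset.prod_congr rfl fun q hq => ?_
    rcases hgood q hq with ⟨h1, h2⟩ | hb
    · have hq0 : q = ((0 : Fin (m + 3)), (0 : Fin (m + 2))) := by
        ext
        · exact h1
        · exact h2
      rw [hq0]
      have hv : ptV (k := k) (m + 2) ((0 : Fin (m + 3)), (0 : Fin (m + 2))) = -1 := by
        simp [ptV]
      have hv' : ptV' (k := k) (m + 2) ((0 : Fin (m + 3)), (0 : Fin (m + 2))) = 1 := by
        simp [ptV']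
      rw [hv, hv', heven.neg_one_pow, one_pow]
    · have hne : (q.1 : ℕ) ≠ 0 := by omega
      have hv : ptV (k := k) (m + 2) q = 1 := by simp [ptV, hne, hb]
      have hv' : ptV' (k := k) (m + 2) q = 1 := by simp [ptV', hne, hb]
      rw [hv, hv']
  · -- some support variable vanishes at both points
    push_neg at hgood
    obtain ⟨q, hq, hbad1, hbad2⟩ := hgood
    have hv : ptV (k := k) (m + 2) q = 0 := by
      by_cases h1 : (q.1 : ℕ) = 0
      · have h2 : (q.2 : ℕ) ≠ 0 := hbad1 h1
        simp [ptV, h1, h2]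
      · simp [ptV, h1, hbad2]
    have hv' : ptV' (k := k) (m + 2) q = 0 := by
      by_cases h1 : (q.1 : ℕ) = 0
      · have h2 : (q.2 : ℕ) ≠ 0 := hbad1 h1
        simp [ptV', h1, h2]
      · simp [ptV', h1, hbad2]
    have hez : e q ≠ 0 := Finsupp.mem_support_iff.mp hq
    rw [Finset.prod_eq_zero hq (by rw [hv]; exact zero_pow hez),
      Finset.prod_eq_zero hq (by rw [hv']; exact zero_pow hez)]


/-- the coordinate-class map of `sepMonomial` -/
def phi (i : Fin (m + 3)) : Fin (m + 2) :=
  if (i : ℕ) ≤ 1 then ⟨0, by omega⟩ else ⟨(i : ℕ) - 1, by have := i.isLt; omega⟩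

lemma sepMonomial_eq (hn : 2 ≤ m + 2) :
    sepMonomial k (m + 2) hn = ∏ i : Fin (m + 3), X (i, phi i) := by
  unfold sepMonomial phi
  refine Finset.prod_congr rfl fun i _ => ?_
  congr 1

lemma phi_zero : phi (0 : Fin (m + 3)) = 0 := by
  unfold phi
  rw [if_pos (by simp)]
  rfl

lemma phi_one : phi (Fin.succ 0 : Fin (m + 3)) = 0 := by
  unfold phi
  rw [if_pos (by simp)]
  rfl

lemma phi_succ_succ (t : Fin (m + 1)) : phi t.succ.succ = t.succ := by
  unfold phi
  rw [if_neg (by simp [Fin.val_succ])]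
  ext
  simp [Fin.val_succ]

lemma sep_invariant (hn : 2 ≤ m + 2) : TorusInvariant (m + 2) (sepMonomial k (m + 2) hn) := by
  intro α p
  rw [sepMonomial_eq, map_prod, map_prod]
  simp only [eval_X]
  have h1 : ∀ i : Fin (m + 3),
      torusAct (m + 2) α p (i, phi i) = (uFac α (phi i) : k) * p (i, phi i) :=
    fun i => torusAct_eq α p _
  simp_rw [h1]
  rw [Finset.prod_mul_distrib]
  have h2 : (∏ i : Fin (m + 3), ((uFac α (phi i) : kˣ) : k)) = 1 := by
    have : (∏ i : Fin (m + 3), uFac (k := k) α (phi i)) = 1 := by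
      rw [Fin.prod_univ_succ, Fin.prod_univ_succ]
      simp_rw [phi_zero, phi_one, phi_succ_succ, uFac_zero, uFac_succ]
      simp_rw [inv_pow]
      rw [Finset.prod_inv_distrib, Finset.prod_pow]
      group
    have h3 := congrArg (Units.val) this
    push_cast at h3
    exact h3
  rw [h2, one_mul]

lemma sep_eval (hn : 2 ≤ m + 2) (hchar : (2 : k) ≠ 0) :
    MvPolynomial.eval (ptV (m + 2)) (sepMonomial k (m + 2) hn) ≠
      MvPolynomial.eval (ptV' (m + 2)) (sepMonomial k (m + 2) hn) := by
  have hv : MvPolynomial.eval (ptV (m + 2)) (sepMonomial k (m + 2) hn) = -1 := by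
    rw [sepMonomial_eq, map_prod]
    simp only [eval_X]
    rw [Fin.prod_univ_succ, Fin.prod_univ_succ]
    simp_rw [phi_zero, phi_one, phi_succ_succ]
    have e0 : ptV (k := k) (m + 2) ((0 : Fin (m + 3)), (0 : Fin (m + 2))) = -1 := by
      simp [ptV]
    have e1 : ptV (k := k) (m + 2) ((Fin.succ 0 : Fin (m + 3)), (0 : Fin (m + 2))) = 1 := by
      simp [ptV]
    have e2 : ∀ t : Fin (m + 1),
        ptV (k := k) (m + 2) (t.succ.succ, t.succ) = 1 := by
      intro t
      simp [ptV, Fin.val_succ]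
    simp_rw [e0, e1, e2]
    simp
  have hv' : MvPolynomial.eval (ptV' (m + 2)) (sepMonomial k (m + 2) hn) = 1 := by
    rw [sepMonomial_eq, map_prod]
    simp only [eval_X]
    rw [Fin.prod_univ_succ, Fin.prod_univ_succ]
    simp_rw [phi_zero, phi_one, phi_succ_succ]
    have e0 : ptV' (k := k) (m + 2) ((0 : Fin (m + 3)), (0 : Fin (m + 2))) = 1 := by
      simp [ptV']
    have e1 : ptV' (k := k) (m + 2) ((Fin.succ 0 : Fin (m + 3)), (0 : Fin (m + 2))) = 1 := by
      simp [ptV']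
    have e2 : ∀ t : Fin (m + 1),
        ptV' (k := k) (m + 2) (t.succ.succ, t.succ) = 1 := by
      intro t
      simp [ptV', Fin.val_succ]
    simp_rw [e0, e1, e2]
    simp
  rw [hv, hv']
  intro h
  exact hchar (by linear_combination (-1 : k) * h)

end Aux

/-- For the torus `(kˣ)^{n−1}` acting on `V^{n+1}` (`char k ≠ 2`): (i) a monomial is an
invariant iff its multidegree is of the form `(2d, d, …, d)`; (ii) the points
`v = (−e₁, e₁, …, e_n)` and `v' = (e₁, e₁, …, e_n)` are separated by the invariant
monomial `x(1)₁x(2)₁x(3)₂⋯x(n+1)_n`; (iii) `v` and `v'` cannot be separated by any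
invariant polynomial depending on at most `n` of the `n+1` vector variables. -/

theorem torus_example_typical_bound_sharp
    {k : Type} [Field k] [IsAlgClosed k] (hchar : (2 : k) ≠ 0)
    (n : ℕ) (hn : 2 ≤ n) :
    (∀ (e : Fin (n + 1) × Fin n →₀ ℕ) (c : k), c ≠ 0 →
      (TorusInvariant n (MvPolynomial.monomial e c) ↔
        ∃ dd : ℕ, (∑ i : Fin (n + 1), e (i, ⟨0, by omega⟩)) = 2 * dd ∧
          ∀ j : Fin n, (j : ℕ) ≠ 0 → (∑ i : Fin (n + 1), e (i, j)) = dd)) ∧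
    (TorusInvariant n (sepMonomial k n hn) ∧
      MvPolynomial.eval (ptV n) (sepMonomial k n hn) ≠
        MvPolynomial.eval (ptV' n) (sepMonomial k n hn)) ∧
    (∀ f : MvPolynomial (Fin (n + 1) × Fin n) k, TorusInvariant n f →
      ∀ S : Finset (Fin (n + 1)), S.card ≤ n →
        f ∈ MvPolynomial.supported k {q : Fin (n + 1) × Fin n | q.1 ∈ S} →
        MvPolynomial.eval (ptV n) f = MvPolynomial.eval (ptV' n) f) := by
  obtain ⟨m, rfl⟩ : ∃ m, n = m + 2 := ⟨n - 2, by omega⟩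
  refine ⟨?_, ⟨sep_invariant hn, sep_eval hn hchar⟩, ?_⟩
  · intro e c hc
    have hzero : (0 : Fin (m + 2)) = ⟨0, by omega⟩ := by ext; simp
    rw [inv_monomial_iff_chi e c hc, chi_one_iff]
    unfold Dg
    rw [hzero]
  · intro f hf S hS hsupp
    conv_lhs => rw [← support_sum_monomial_coeff f]
    conv_rhs => rw [← support_sum_monomial_coeff f]
    rw [map_sum, map_sum]
    refine Finset.sum_congr rfl fun e he => ?_
    have hchi := chi_of_invariant f hf e he
    have hshape := (chi_one_iff (Dg e)).mp hchi
    apply eval_mon_eq e _ hshape S hS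
    intro q hq
    have hv : q ∈ f.vars := (mem_vars q).mpr ⟨e, he, hq⟩
    exact (mem_supported.mp hsupp) hv
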